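/- Let n > 1 and k > 1 be integers. If there exists an exact covering system with exactly k congruence classes, all of whose moduli are powers of n, then k ≡ 1 (mod n-1). -/

import Mathlib

open Finset

lemma fiber_card_aux (N M : ℕ) [NeZero N] [NeZero M] (h : M ∣ N) (b : ZMod M) :
    (Finset.univ.filter fun x : ZMod N => ZMod.castHom h (ZMod M) x = b).card = N / M := by
  set φ := ZMod.castHom h (ZMod M) with hφ
  have hsurj : Function.Surjective φ := by
    intro b
    exact ⟨(b.val : ZMod N), by simp [hφ, map_natCast]⟩
  have hconst : ∀ b : ZMod M,
      (Finset.univ.filter fun x : ZMod N => φ x = b).card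
        = (Finset.univ.filter fun x : ZMod N => φ x = 0).card := by
    intro b
    obtain ⟨c, hc⟩ := hsurj b
    apply Finset.card_nbij' (fun x => x - c) (fun x => x + c)
    · intro a ha
      simp only [mem_coe, mem_filter, mem_univ, true_and] at ha ⊢
      rw [map_sub, ha, hc, sub_self]
    · intro a ha
      simp only [mem_coe, mem_filter, mem_univ, true_and] at ha ⊢
      rw [map_add, ha, hc, zero_add]
    · intro a _; ring
    · intro a _; ring
  have htot : ∑ b : ZMod M, (Finset.univ.filter fun x : ZMod N => φ x = b).card = N := by
    rw [← Finset.card_eq_sum_card_fiberwise (fun x _ => Finset.mem_univ (φ x))]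
    simp [ZMod.card]
  have htot2 : M * (Finset.univ.filter fun x : ZMod N => φ x = 0).card = N := by
    calc M * (Finset.univ.filter fun x : ZMod N => φ x = 0).card
        = ∑ _b : ZMod M, (Finset.univ.filter fun x : ZMod N => φ x = 0).card := by
          rw [Finset.sum_const, Finset.card_univ, ZMod.card, smul_eq_mul]
      _ = ∑ b : ZMod M, (Finset.univ.filter fun x : ZMod N => φ x = b).card :=
          Finset.sum_congr rfl fun b _ => (hconst b).symm
      _ = N := htot
  rw [hconst b]
  exact (Nat.div_eq_of_eq_mul_left (NeZero.pos M) (by rw [mul_comm]; exact htot2.symm)).symm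

theorem exact_covering_prime_power_moduli (n k : ℕ) (hn : 1 < n) (hk : 1 < k)
    (m : Fin k → ℕ) (r : Fin k → ℤ)
    (hpow : ∀ i, ∃ e : ℕ, 1 ≤ e ∧ m i = n ^ e)
    (hcov : ∀ z : ℤ, ∃ i, z ≡ r i [ZMOD (m i : ℤ)])
    (hdisj : ∀ i j, i ≠ j → ∀ z : ℤ,
      ¬ (z ≡ r i [ZMOD (m i : ℤ)] ∧ z ≡ r j [ZMOD (m j : ℤ)])) :
    k ≡ 1 [MOD n - 1] := by
  classical
  choose e he hme using hpow
  set E := Finset.univ.sup e with hE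
  have heE : ∀ i, e i ≤ E := fun i => Finset.le_sup (Finset.mem_univ i)
  have hn0 : 0 < n := by omega
  set N := n ^ E with hN
  have hN0 : 0 < N := pow_pos hn0 E
  haveI : NeZero N := ⟨hN0.ne'⟩
  have hm0 : ∀ i, 0 < m i := fun i => by rw [hme i]; exact pow_pos hn0 _
  haveI : ∀ i, NeZero (m i) := fun i => ⟨(hm0 i).ne'⟩
  have hdvd : ∀ i, m i ∣ N := fun i => by
    rw [hme i]; exact pow_dvd_pow n (heE i)
  -- the condition
  have hcond : ∀ (i : Fin k) (x : ZMod N),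
      ((x.val : ℤ) ≡ r i [ZMOD (m i : ℤ)]) ↔ ZMod.castHom (hdvd i) (ZMod (m i)) x = (r i : ZMod (m i)) := by
    intro i x
    rw [← ZMod.intCast_eq_intCast_iff]
    constructor
    · intro hx
      rw [ZMod.castHom_apply, ← ZMod.natCast_val, ← Int.cast_natCast, hx]
    · intro hx
      rw [← hx, ZMod.castHom_apply, ← ZMod.natCast_val, Int.cast_natCast]
  -- fiberwise partition
  set g : ZMod N → Fin k := fun x => (hcov (x.val : ℤ)).choose with hg
  have hgspec : ∀ x : ZMod N, (x.val : ℤ) ≡ r (g x) [ZMOD (m (g x) : ℤ)] :=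
    fun x => (hcov (x.val : ℤ)).choose_spec
  have hfib : ∀ i : Fin k, (Finset.univ.filter fun x : ZMod N => g x = i)
      = (Finset.univ.filter fun x : ZMod N => ZMod.castHom (hdvd i) (ZMod (m i)) x = (r i : ZMod (m i))) := by
    intro i
    ext x
    simp only [Finset.mem_filter, Finset.mem_univ, true_and, ← hcond]
    constructor
    · rintro rfl; exact hgspec x
    · intro hx
      by_contra hne
      exact hdisj (g x) i hne (x.val : ℤ) ⟨hgspec x, hx⟩
  have hsum : N = ∑ i : Fin k, N / m i := by
    calc N = (Finset.univ : Finset (ZMod N)).card := by rw [Finset.card_univ, ZMod.card]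
      _ = ∑ i : Fin k, (Finset.univ.filter fun x : ZMod N => g x = i).card :=
          Finset.card_eq_sum_card_fiberwise (fun x _ => Finset.mem_univ (g x))
      _ = ∑ i : Fin k, N / m i := Finset.sum_congr rfl fun i _ => by
          rw [hfib i, fiber_card_aux N (m i) (hdvd i)]
  -- arithmetic: N / m i = n ^ (E - e i)
  have hdivpow : ∀ i, N / m i = n ^ (E - e i) := fun i => by
    rw [hme i, hN, Nat.pow_div (heE i) hn0]
  have key : n ^ E = ∑ i : Fin k, n ^ (E - e i) := by
    rw [← hN, hsum]
    exact Finset.sum_congr rfl fun i _ => hdivpow i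
  -- finish mod n - 1
  have hcast : ((k : ℕ) : ZMod (n-1)) = ((1 : ℕ) : ZMod (n-1)) := by
    have hn1 : ((n : ℕ) : ZMod (n-1)) = 1 := by
      have : n = (n - 1) + 1 := by omega
      rw [this]
      push_cast
      simp [ZMod.natCast_self]
    have := congrArg (fun t : ℕ => (t : ZMod (n-1))) key
    simp only [Nat.cast_pow, Nat.cast_sum, hn1, one_pow] at this
    simpa using this.symm
  exact (ZMod.natCast_eq_natCast_iff _ _ _).mp hcast
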